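/- The Petersen graph does not admit a barbell partition. -/

import Mathlib

open SimpleGraph

/-- A barbell partition of a graph `G`: a partition of the vertex set into
`R`, `W1`, `W2` with `W1, W2` nonempty, no edges between `W1` and `W2`, and
every vertex of `R` has a number of neighbors in each `Wi` different from 1. -/
def IsBarbellPartition {V : Type*} (G : SimpleGraph V) (R W1 W2 : Set V) : Prop :=
  R ∪ W1 ∪ W2 = Set.univ ∧ Disjoint R W1 ∧ Disjoint R W2 ∧ Disjoint W1 W2 ∧
  W1.Nonempty ∧ W2.Nonempty ∧
  (∀ w1 ∈ W1, ∀ w2 ∈ W2, ¬ G.Adj w1 w2) ∧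
  (∀ v ∈ R, (G.neighborSet v ∩ W1).ncard ≠ 1 ∧ (G.neighborSet v ∩ W2).ncard ≠ 1)

/-- `G` admits a barbell partition. -/
def HasBarbellPartition {V : Type*} (G : SimpleGraph V) : Prop :=
  ∃ R W1 W2 : Set V, IsBarbellPartition G R W1 W2

/-- A fort of `G`: a nonempty vertex set `F` such that no vertex outside `F`
has exactly one neighbor in `F`. -/
def IsFort {V : Type*} (G : SimpleGraph V) (F : Set V) : Prop :=
  F.Nonempty ∧ ∀ v ∉ F, (G.neighborSet v ∩ F).ncard ≠ 1

/-- The Petersen graph as the Kneser graph K(5,2): vertices are 2-element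
subsets of a 5-element set, adjacent iff disjoint. -/
def petersenGraph : SimpleGraph {s : Finset (Fin 5) // s.card = 2} where
  Adj x y := Disjoint x.1 y.1
  symm := ⟨fun _ _ h => h.symm⟩
  loopless := by
    constructor
    intro x h
    have h0 : x.1 = ∅ := (Finset.disjoint_self_iff_empty _).mp h
    have h2 := x.2
    rw [h0] at h2
    simp at h2

namespace PetersenAux

abbrev PV := {s : Finset (Fin 5) // s.card = 2}

instance : DecidableRel petersenGraph.Adj := fun x y =>
  decidable_of_iff (Disjoint x.1 y.1) Iff.rfl

/-- Explicit adjacency matrix of the Petersen graph. -/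
def adjM : Fin 10 → Fin 10 → Bool :=
  ![![false, false, false, false, false, false, false, true, true, true],
  ![false, false, false, false, false, true, true, false, false, true],
  ![false, false, false, false, true, false, true, false, true, false],
  ![false, false, false, false, true, true, false, true, false, false],
  ![false, false, true, true, false, false, false, false, false, true],
  ![false, true, false, true, false, false, false, false, true, false],
  ![false, true, true, false, false, false, false, true, false, false],
  ![true, false, false, true, false, false, true, false, false, false],
  ![true, false, true, false, false, true, false, false, false, false],
  ![true, true, false, false, true, false, false, false, false, false]]

/-- Explicit enumeration of the vertices. -/
def g : Fin 10 → PV :=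
  ![⟨{0,1}, rfl⟩, ⟨{0,2}, rfl⟩, ⟨{0,3}, rfl⟩, ⟨{0,4}, rfl⟩, ⟨{1,2}, rfl⟩,
   ⟨{1,3}, rfl⟩, ⟨{1,4}, rfl⟩, ⟨{2,3}, rfl⟩, ⟨{2,4}, rfl⟩, ⟨{3,4}, rfl⟩]

theorem g_surj : ∀ x : PV, ∃ i, g i = x := by decide

theorem g_inj : Function.Injective g := by decide

theorem g_adj : ∀ i j, petersenGraph.Adj (g i) (g j) ↔ adjM i j = true := by decide

/-- Count of `true` values of a Boolean predicate on `Fin 10`. -/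
def cntP (p : Fin 10 → Bool) : ℕ := ((List.finRange 10).filter p).length

theorem cntP_eq (p : Fin 10 → Bool) :
    cntP p = (Finset.univ.filter (fun i => p i = true)).card := by
  simp [cntP, Fin.univ_def, Finset.filter, Finset.card]

theorem ncard_eq_cntP (p : Fin 10 → Bool) :
    {i : Fin 10 | p i = true}.ncard = cntP p := by
  rw [cntP_eq, ← Set.ncard_coe_finset]
  congr 1
  ext i
  simp

set_option maxRecDepth 100000 in
/-- The key computational fact: every fort of the Petersen graph (in matrix
form) has at least 4 vertices, and at most 2 vertices lie outside its closed
neighborhood. -/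
theorem key10 : ∀ b0 b1 b2 b3 b4 b5 b6 b7 b8 b9 : Bool,
    (∃ v, ![b0,b1,b2,b3,b4,b5,b6,b7,b8,b9] v = true) →
    (∀ v, ![b0,b1,b2,b3,b4,b5,b6,b7,b8,b9] v = false →
      cntP (fun u => adjM v u && ![b0,b1,b2,b3,b4,b5,b6,b7,b8,b9] u) ≠ 1) →
    4 ≤ cntP ![b0,b1,b2,b3,b4,b5,b6,b7,b8,b9] ∧
    cntP (fun v => !(![b0,b1,b2,b3,b4,b5,b6,b7,b8,b9] v) &&
      decide (∀ u, ![b0,b1,b2,b3,b4,b5,b6,b7,b8,b9] u = true → adjM v u = false)) ≤ 2 := by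
  decide

theorem key (p : Fin 10 → Bool)
    (h1 : ∃ v, p v = true)
    (h2 : ∀ v, p v = false → cntP (fun u => adjM v u && p u) ≠ 1) :
    4 ≤ cntP p ∧
    cntP (fun v => !(p v) && decide (∀ u, p u = true → adjM v u = false)) ≤ 2 := by
  have hp : ![p 0, p 1, p 2, p 3, p 4, p 5, p 6, p 7, p 8, p 9] = p := by
    funext i; fin_cases i <;> rfl
  have := key10 (p 0) (p 1) (p 2) (p 3) (p 4) (p 5) (p 6) (p 7) (p 8) (p 9)
  rw [hp] at this
  exact this h1 h2

open Classical in
/-- The transfer of the counting fact to sets of vertices of the Petersen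
graph. -/
theorem main : ¬ HasBarbellPartition petersenGraph := by
  rintro ⟨R, W1, W2, hU, hRW1, hRW2, hW12, hne1, hne2, hedge, hdeg⟩
  classical
  -- Boolean membership functions
  set p1 : Fin 10 → Bool := fun i => decide (g i ∈ W1) with hp1
  set p2 : Fin 10 → Bool := fun i => decide (g i ∈ W2) with hp2
  -- the neighbor-count bridge
  have bridge : ∀ (v : Fin 10) (W : Set PV) (p : Fin 10 → Bool),
      (∀ i, p i = true ↔ g i ∈ W) →
      (petersenGraph.neighborSet (g v) ∩ W).ncard = cntP (fun u => adjM v u && p u) := by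
    intro v W p hpW
    have himg : petersenGraph.neighborSet (g v) ∩ W
        = g '' {i : Fin 10 | (adjM v i && p i) = true} := by
      ext x
      obtain ⟨j, rfl⟩ := g_surj x
      simp only [Set.mem_inter_iff, mem_neighborSet, Set.mem_image]
      constructor
      · rintro ⟨hadj, hW⟩
        exact ⟨j, by simp [Set.mem_setOf_eq, (g_adj v j).mp hadj, (hpW j).mpr hW], rfl⟩
      · rintro ⟨i, hi, hgi⟩
        have hij : i = j := g_inj hgi
        subst hij
        simp only [Set.mem_setOf_eq, Bool.and_eq_true] at hi
        exact ⟨(g_adj v i).mpr hi.1, (hpW i).mp hi.2⟩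
    rw [himg, Set.ncard_image_of_injective _ g_inj, ncard_eq_cntP]
  have hbr1 : ∀ i, p1 i = true ↔ g i ∈ W1 := fun i => by simp [hp1]
  have hbr2 : ∀ i, p2 i = true ↔ g i ∈ W2 := fun i => by simp [hp2]
  -- vertices not in W1 belong to R or W2
  have hcover : ∀ x : PV, x ∈ R ∨ x ∈ W1 ∨ x ∈ W2 := by
    intro x
    have : x ∈ R ∪ W1 ∪ W2 := hU ▸ Set.mem_univ x
    rcases this with (h | h) | h
    · exact Or.inl h
    · exact Or.inr (Or.inl h)
    · exact Or.inr (Or.inr h)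
  -- fort property for W1
  have hfort1 : ∀ v, p1 v = false → cntP (fun u => adjM v u && p1 u) ≠ 1 := by
    intro v hv
    rw [← bridge v W1 p1 hbr1]
    have hnot : g v ∉ W1 := by
      intro h; rw [(hbr1 v).mpr h] at hv; exact Bool.noConfusion hv
    rcases hcover (g v) with h | h | h
    · exact (hdeg _ h).1
    · exact absurd h hnot
    · have : petersenGraph.neighborSet (g v) ∩ W1 = ∅ := by
        ext y
        simp only [Set.mem_inter_iff, mem_neighborSet, Set.mem_empty_iff_false, iff_false]
        rintro ⟨hadj, hy⟩
        exact hedge y hy (g v) h hadj.symm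
      rw [this]
      simp
  -- fort property for W2
  have hfort2 : ∀ v, p2 v = false → cntP (fun u => adjM v u && p2 u) ≠ 1 := by
    intro v hv
    rw [← bridge v W2 p2 hbr2]
    have hnot : g v ∉ W2 := by
      intro h; rw [(hbr2 v).mpr h] at hv; exact Bool.noConfusion hv
    rcases hcover (g v) with h | h | h
    · exact (hdeg _ h).2
    · have : petersenGraph.neighborSet (g v) ∩ W2 = ∅ := by
        ext y
        simp only [Set.mem_inter_iff, mem_neighborSet, Set.mem_empty_iff_false, iff_false]
        rintro ⟨hadj, hy⟩
        exact hedge (g v) h y hy hadj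
      rw [this]
      simp
    · exact absurd h hnot
  -- nonemptiness
  have hne1' : ∃ v, p1 v = true := by
    obtain ⟨x, hx⟩ := hne1
    obtain ⟨i, rfl⟩ := g_surj x
    exact ⟨i, (hbr1 i).mpr hx⟩
  have hne2' : ∃ v, p2 v = true := by
    obtain ⟨x, hx⟩ := hne2
    obtain ⟨i, rfl⟩ := g_surj x
    exact ⟨i, (hbr2 i).mpr hx⟩
  -- apply the key facts
  obtain ⟨h4₂, -⟩ := key p2 hne2' hfort2
  obtain ⟨-, h2₁⟩ := key p1 hne1' hfort1
  -- W2 lies in the far set of W1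
  set q : Fin 10 → Bool :=
    fun v => !(p1 v) && decide (∀ u, p1 u = true → adjM v u = false) with hq
  have hsub : {i : Fin 10 | p2 i = true} ⊆ {i : Fin 10 | q i = true} := by
    intro v hv
    simp only [Set.mem_setOf_eq] at hv ⊢
    have hv2 : g v ∈ W2 := (hbr2 v).mp hv
    have hnotW1 : g v ∉ W1 := fun h => hW12.ne_of_mem h hv2 rfl
    have h1 : p1 v = false := by
      cases h : p1 v
      · rfl
      · exact absurd ((hbr1 v).mp h) hnotW1
    rw [hq]
    simp only [h1, Bool.not_false, Bool.true_and, decide_eq_true_eq]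
    intro u hu
    have hu1 : g u ∈ W1 := (hbr1 u).mp hu
    cases hadj : adjM v u
    · rfl
    · exact absurd ((g_adj v u).mpr hadj).symm (hedge (g u) hu1 (g v) hv2)
  have hle : cntP p2 ≤ cntP q := by
    rw [← ncard_eq_cntP, ← ncard_eq_cntP]
    exact Set.ncard_le_ncard hsub (Set.toFinite _)
  omega

end PetersenAux

/-- The Petersen graph does not admit a barbell partition. -/
theorem petersen_no_barbellPartition : ¬ HasBarbellPartition petersenGraph :=
  PetersenAux.main
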